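/- Fix n, r ≥ 0 and let Z, M be the (r+1)2^n × (r+1)2^n matrices indexed by P_{n,r} with entries z_{a,b} = θ_{a,b}(Y_0)·φ_{a,b}(Y_1,…,Y_n) and m_{a,b} = (-1)^{Δ_{n+1}(a,b)} (∏_{i=0}^{n} Y_i^{Δ_i(a,b)}) · θ_{a,b}(Y_0^{-1})·φ_{a,b}(Y_1^{-1},…,Y_n^{-1}), over the field of rational functions in Y_0,…,Y_n. Then M·Z = Z·M = I. -/

import Mathlib

open Finset

attribute [local instance] Classical.propDecidable

def Pmem (n r : ℕ) (a : ℕ → ℕ) : Prop :=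
  a 0 ≤ r ∧ (∀ i, 1 ≤ i → a i ≤ 1) ∧ (∀ i, n < i → a i = 0)

def leT (n : ℕ) (a b : ℕ → ℕ) : Prop :=
  ∀ i ≤ n, ∑ j ∈ Finset.range (i + 1), a j ≤ ∑ j ∈ Finset.range (i + 1), b j

/-- `s_0(a) = binom(a_0, 2)` and `s_i(a) = ∑_{k=0}^{i-1} a_k` for `i ≥ 1`. -/
def sfun (a : ℕ → ℕ) (i : ℕ) : ℤ :=
  if i = 0 then Nat.choose (a 0) 2 else ∑ j ∈ Finset.range i, (a j : ℤ)

/-- `Δ_i(a,b) = s_i(b) - s_i(a)`. -/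
def Δ (a b : ℕ → ℕ) (i : ℕ) : ℤ := sfun b i - sfun a i

/-- The Gaussian (`q`-)binomial coefficient `binom(n,m)_q`; it is `0` when `m > n`. -/
noncomputable def qbinom {F : Type*} [Field F] (q : F) (n m : ℕ) : F :=
  if m ≤ n then ∏ t ∈ Finset.range m, (1 - q ^ (n - m + t + 1)) / (1 - q ^ (t + 1)) else 0

/-- The refined leg polynomial `φ_{a,b}(Y_1,…,Y_n) = ∏_{i ∈ L_{a,b}} (1 - Y_i^{Δ_i(a,b)})`
if `a ≤_t b`, and `0` otherwise, where `L_{a,b} = {i ∈ [n] : a_i = 1, b_i = 0}`. -/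
noncomputable def phi {F : Type*} [Field F] (n : ℕ) (Y : ℕ → F) (a b : ℕ → ℕ) : F :=
  if leT n a b then
    ∏ i ∈ Finset.Icc 1 n, (if a i = 1 ∧ b i = 0 then 1 - (Y i) ^ (Δ a b i) else 1)
  else 0

/-- Encoding of the `(r+1)·2^n` elements of `P_{n,r}` as tuples. -/
def idxTup (n r : ℕ) (p : Fin (r + 1) × (Fin n → Fin 2)) : ℕ → ℕ :=
  fun i => if i = 0 then (p.1 : ℕ)
    else if h : 1 ≤ i ∧ i ≤ n then (p.2 ⟨i - 1, by omega⟩ : ℕ) else 0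

/-- The field `ℚ(Y_0, …, Y_n)` of rational functions. -/
abbrev RF (n : ℕ) := FractionRing (MvPolynomial (Fin (n + 1)) ℚ)

/-- The variables `Y_0, …, Y_n` in `ℚ(Y_0, …, Y_n)`. -/
noncomputable def Yvar (n : ℕ) (i : ℕ) : RF n :=
  if h : i < n + 1 then algebraMap (MvPolynomial (Fin (n + 1)) ℚ) (RF n) (MvPolynomial.X ⟨i, h⟩)
  else 1

/-- The zeta matrix: `z_{a,b} = θ_{a,b}(Y_0) · φ_{a,b}(Y_1,…,Y_n)`. -/
noncomputable def Zmat (n r : ℕ) :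
    Matrix (Fin (r + 1) × (Fin n → Fin 2)) (Fin (r + 1) × (Fin n → Fin 2)) (RF n) :=
  fun p q =>
    qbinom (Yvar n 0) (idxTup n r q 0) (idxTup n r p 0) *
      phi n (Yvar n) (idxTup n r p) (idxTup n r q)

/-- The Möbius matrix:
`m_{a,b} = (-1)^{Δ_{n+1}(a,b)} (∏_{i=0}^{n} Y_i^{Δ_i(a,b)}) θ_{a,b}(Y_0⁻¹) φ_{a,b}(Y⁻¹)`. -/
noncomputable def Mmat (n r : ℕ) :
    Matrix (Fin (r + 1) × (Fin n → Fin 2)) (Fin (r + 1) × (Fin n → Fin 2)) (RF n) :=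
  fun p q =>
    (-1 : RF n) ^ (Δ (idxTup n r p) (idxTup n r q) (n + 1)) *
      (∏ i ∈ Finset.range (n + 1), (Yvar n i) ^ (Δ (idxTup n r p) (idxTup n r q) i)) *
      (qbinom (Yvar n 0)⁻¹ (idxTup n r q 0) (idxTup n r p 0) *
        phi n (fun i => (Yvar n i)⁻¹) (idxTup n r p) (idxTup n r q))


-- ===================== auxiliary development =====================

section QB
variable {F : Type*} [Field F] (q : F)

/-- `qfac q m = ∏_{t<m} (1 - q^{t+1})`. -/
noncomputable def qfac (q : F) (m : ℕ) : F := ∏ t ∈ Finset.range m, (1 - q ^ (t + 1))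

lemma one_sub_pow_ne (hq : ∀ k : ℕ, 1 ≤ k → q ^ k ≠ 1) {k : ℕ} (hk : 1 ≤ k) :
    1 - q ^ k ≠ 0 := by
  intro h
  exact hq k hk (by linear_combination -h)

lemma qfac_ne_zero (hq : ∀ k : ℕ, 1 ≤ k → q ^ k ≠ 1) (m : ℕ) : qfac q m ≠ 0 := by
  apply Finset.prod_ne_zero_iff.2
  intro t _
  exact one_sub_pow_ne q hq (by omega)

lemma qfac_succ (m : ℕ) : qfac q (m + 1) = qfac q m * (1 - q ^ (m + 1)) := by
  simp [qfac, Finset.prod_range_succ]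

lemma qbinom_eq (hq : ∀ k : ℕ, 1 ≤ k → q ^ k ≠ 1) {n k : ℕ} (h : k ≤ n) :
    qbinom q n k = qfac q n / (qfac q k * qfac q (n - k)) := by
  rw [qbinom, if_pos h]
  have h1 : qfac q n = qfac q (n - k) * ∏ t ∈ Finset.range k, (1 - q ^ (n - k + t + 1)) := by
    have h2 : n = (n - k) + k := by omega
    conv_lhs => rw [qfac, h2, Finset.prod_range_add, ← qfac]
  rw [Finset.prod_div_distrib, h1, ← qfac]
  field_simp [qfac_ne_zero q hq]

lemma qbinom_of_gt {n k : ℕ} (h : n < k) : qbinom q n k = 0 := by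
  rw [qbinom, if_neg (by omega)]

lemma qbinom_zero_right (n : ℕ) : qbinom q n 0 = 1 := by
  simp [qbinom]

lemma qbinom_self (hq : ∀ k : ℕ, 1 ≤ k → q ^ k ≠ 1) (n : ℕ) : qbinom q n n = 1 := by
  rw [qbinom_eq q hq le_rfl]
  have h0 : qfac q (n - n) = 1 := by simp [qfac]
  rw [h0]
  field_simp [qfac_ne_zero q hq]

lemma qbinom_pascal (hq : ∀ k : ℕ, 1 ≤ k → q ^ k ≠ 1) (n k : ℕ) :
    qbinom q (n + 1) (k + 1) = qbinom q n k + q ^ (k + 1) * qbinom q n (k + 1) := by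
  rcases lt_or_ge n k with h | h
  · rw [qbinom_of_gt q (by omega), qbinom_of_gt q (by omega), qbinom_of_gt q (by omega)]
    ring
  rcases eq_or_lt_of_le h with rfl | h2
  · rw [qbinom_self q hq, qbinom_self q hq, qbinom_of_gt q (by omega)]
    ring
  · have hk1 : k + 1 ≤ n := h2
    rw [qbinom_eq q hq (by omega), qbinom_eq q hq (by omega), qbinom_eq q hq (by omega)]
    have e1 : n + 1 - (k + 1) = n - k := by omega
    have e2 : n - (k + 1) = n - k - 1 := by omega
    rw [e1, e2]
    have e3 : qfac q (n + 1) = qfac q n * (1 - q ^ (n + 1)) := qfac_succ q n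
    have e4 : qfac q (k + 1) = qfac q k * (1 - q ^ (k + 1)) := qfac_succ q k
    have e5 : qfac q (n - k) = qfac q (n - k - 1) * (1 - q ^ (n - k)) := by
      obtain ⟨d, hd⟩ : ∃ d, n - k = d + 1 := ⟨n - k - 1, by omega⟩
      rw [hd, qfac_succ]
      norm_num
    rw [e3, e4, e5]
    have h6 : q ^ (k + 1) * q ^ (n - k) = q ^ (n + 1) := by
      rw [← pow_add]
      congr 1
      omega
    rw [← h6]
    have n1 := qfac_ne_zero q hq n
    have n2 := qfac_ne_zero q hq k
    have n3 := qfac_ne_zero q hq (n - k - 1)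
    have n4 := one_sub_pow_ne q hq (show 1 ≤ k+1 by omega)
    have n5 := one_sub_pow_ne q hq (show 1 ≤ n-k by omega)
    have n6 : 1 - q ^ (k+1) * q ^ (n-k) ≠ 0 := by
      rw [h6]; exact one_sub_pow_ne q hq (show 1 ≤ n+1 by omega)
    field_simp
    ring

lemma qbinom_altsum (hq : ∀ k : ℕ, 1 ≤ k → q ^ k ≠ 1) (m : ℕ) (hm : 1 ≤ m) :
    ∑ k ∈ Finset.range (m + 1), (-1 : F) ^ k * q ^ (k.choose 2) * qbinom q m k = 0 := by
  obtain ⟨m', rfl⟩ : ∃ m', m = m' + 1 := ⟨m - 1, by omega⟩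
  set T : ℕ → F := fun i => (-1 : F) ^ i * q ^ ((i+1).choose 2) * qbinom q m' i with hT
  rw [Finset.sum_range_succ']
  have hterm : ∀ j ∈ Finset.range (m' + 1),
      (-1 : F) ^ (j + 1) * q ^ ((j+1).choose 2) * qbinom q (m' + 1) (j + 1)
      = T (j + 1) - T j := by
    intro j _
    rw [hT]
    simp only
    rw [qbinom_pascal q hq]
    have hch : (j + 2).choose 2 = (j+1).choose 2 + (j + 1) := by
      rw [Nat.choose_succ_succ (j+1) 1, Nat.choose_one_right]
      norm_num
      omega
    rw [hch, pow_add]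
    ring
  rw [Finset.sum_congr rfl hterm, Finset.sum_range_sub]
  have h1 : T (m' + 1) = 0 := by
    rw [hT]
    simp only
    rw [qbinom_of_gt q (by omega)]
    ring
  have h2 : T 0 = 1 := by
    simp [hT, qbinom_zero_right]
  rw [h1, h2]
  simp [qbinom_zero_right]

lemma hq_inv (hq : ∀ k : ℕ, 1 ≤ k → q ^ k ≠ 1) : ∀ k : ℕ, 1 ≤ k → (q⁻¹) ^ k ≠ 1 := by
  intro k hk h
  rw [inv_pow, inv_eq_one] at h
  exact hq k hk h

lemma qbinom_inv (hq0 : q ≠ 0) (hq : ∀ k : ℕ, 1 ≤ k → q ^ k ≠ 1) {n k : ℕ} (h : k ≤ n) :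
    qbinom q⁻¹ n k * q ^ (k * (n - k)) = qbinom q n k := by
  rw [qbinom, qbinom, if_pos h, if_pos h]
  have h5 : (q : F) ^ (k * (n - k)) = ∏ _t ∈ Finset.range k, q ^ (n - k) := by
    rw [Finset.prod_const, ← pow_mul, Finset.card_range]
    congr 1
    ring
  rw [h5, ← Finset.prod_mul_distrib]
  apply Finset.prod_congr rfl
  intro t _
  have hS : q ^ (n - k + t + 1) = q ^ (t + 1) * q ^ (n - k) := by
    rw [← pow_add]; congr 1; omega
  have h1 : (1 : F) - q ^ (t + 1) ≠ 0 := one_sub_pow_ne q hq (by omega)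
  have h2 : (q : F) ^ (t + 1) ≠ 0 := pow_ne_zero _ hq0
  have h4 : (1 : F) - q⁻¹ ^ (t + 1) ≠ 0 := one_sub_pow_ne q⁻¹ (hq_inv q hq) (by omega)
  rw [div_mul_eq_mul_div, div_eq_div_iff h4 h1]
  rw [inv_pow, inv_pow]
  field_simp
  linear_combination (1 - q ^ (t+1)) * hS

lemma qbinom_trinom (hq : ∀ k : ℕ, 1 ≤ k → q ^ k ≠ 1) {a b c : ℕ} (hab : a ≤ b) (hbc : b ≤ c) :
    qbinom q b a * qbinom q c b = qbinom q c a * qbinom q (c - a) (b - a) := by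
  rw [qbinom_eq q hq hab, qbinom_eq q hq hbc, qbinom_eq q hq (hab.trans hbc),
    qbinom_eq q hq (by omega)]
  have e : c - a - (b - a) = c - b := by omega
  have e2 : b - (b - (b-a)) = b - a := by omega
  rw [e]
  field_simp [qfac_ne_zero q hq]

lemma chain_sum (hq : ∀ k : ℕ, 1 ≤ k → q ^ k ≠ 1) (a c r : ℕ) (hc : c ≤ r) :
    ∑ b ∈ Finset.range (r + 1), (if a ≤ b ∧ b ≤ c then
        (-1 : F) ^ (b - a) * q ^ ((b - a).choose 2) * qbinom q (c - a) (b - a) else 0)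
      = if a = c then 1 else 0 := by
  by_cases hac : a ≤ c
  · have hfil : Finset.filter (fun b => a ≤ b ∧ b ≤ c) (Finset.range (r + 1)) = Finset.Icc a c := by
      ext b
      simp only [Finset.mem_filter, Finset.mem_range, Finset.mem_Icc]
      omega
    have hmap : Finset.Icc a c
        = Finset.map ⟨fun k => a + k, add_right_injective a⟩ (Finset.range (c - a + 1)) := by
      ext b
      simp only [Finset.mem_Icc, Finset.mem_map, Finset.mem_range, Function.Embedding.coeFn_mk]
      constructor
      · intro hb; exact ⟨b - a, by omega, by omega⟩
      · rintro ⟨k, hk, rfl⟩; omega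
    rw [← Finset.sum_filter, hfil, hmap, Finset.sum_map]
    simp only [Function.Embedding.coeFn_mk]
    have hterm : ∀ k, a + k - a = k := fun k => by omega
    simp only [hterm]
    rcases eq_or_lt_of_le hac with rfl | hlt
    · simp [qbinom_zero_right]
    · rw [if_neg (by omega)]
      exact qbinom_altsum q hq (c - a) (by omega)
  · rw [if_neg (by omega)]
    apply Finset.sum_eq_zero
    intro b _
    rw [if_neg (by omega)]

end QB

-- ===================== Yvar facts =====================

lemma Yvar_ne_zero (n i : ℕ) : Yvar n i ≠ 0 := by
  unfold Yvar
  split_ifs with h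
  · intro hc
    have := (map_eq_zero_iff _ (IsFractionRing.injective (MvPolynomial (Fin (n + 1)) ℚ)
      (RF n))).1 hc
    exact MvPolynomial.X_ne_zero _ this
  · exact one_ne_zero

lemma Yvar_pow_ne_one (n i : ℕ) (hi : i < n + 1) :
    ∀ k : ℕ, 1 ≤ k → (Yvar n i) ^ k ≠ 1 := by
  intro k hk hc
  unfold Yvar at hc
  rw [dif_pos hi, ← map_pow, show (1 : RF n) = algebraMap (MvPolynomial (Fin (n + 1)) ℚ) (RF n) 1 from (map_one _).symm] at hc
  have h2 := IsFractionRing.injective (MvPolynomial (Fin (n + 1)) ℚ) (RF n) hc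
  have h3 := congrArg (MvPolynomial.coeff (Finsupp.single (⟨i, hi⟩ : Fin (n + 1)) k)) h2
  rw [MvPolynomial.X_pow_eq_monomial, MvPolynomial.coeff_monomial, MvPolynomial.coeff_one] at h3
  have h4 : Finsupp.single (⟨i, hi⟩ : Fin (n + 1)) k ≠ 0 := by
    intro h5
    have := Finsupp.single_eq_zero.1 h5
    omega
  rw [if_pos rfl, if_neg (by exact fun h => h4 h.symm)] at h3
  exact one_ne_zero h3

-- ===================== the embedding RF n →+* RF (n+1) =====================

set_option synthInstance.maxHeartbeats 400000 in
lemma emb_inj (n : ℕ) : Function.Injective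
    ((algebraMap (MvPolynomial (Fin (n + 2)) ℚ) (RF (n + 1))).comp
      (MvPolynomial.rename (Fin.castSucc : Fin (n + 1) → Fin (n + 2))).toRingHom) := by
  exact (IsFractionRing.injective _ _).comp
    (MvPolynomial.rename_injective _ (Fin.castSucc_injective _))

set_option synthInstance.maxHeartbeats 400000 in
noncomputable def emb (n : ℕ) : RF n →+* RF (n + 1) := IsFractionRing.lift (emb_inj n)

lemma emb_Yvar (n i : ℕ) (hi : i < n + 1) : emb n (Yvar n i) = Yvar (n + 1) i := by
  unfold Yvar
  rw [dif_pos hi, dif_pos (by omega : i < n + 2)]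
  unfold emb
  rw [IsFractionRing.lift_algebraMap]
  simp only [RingHom.comp_apply, AlgHom.toRingHom_eq_coe, RingHom.coe_coe,
    MvPolynomial.rename_X]
  congr 1

-- ===================== map lemmas =====================

lemma map_qbinom {F G : Type*} [Field F] [Field G] (f : F →+* G) (q : F) (n m : ℕ) :
    f (qbinom q n m) = qbinom (f q) n m := by
  unfold qbinom
  split_ifs with h
  · rw [map_prod]
    apply Finset.prod_congr rfl
    intro t _
    rw [map_div₀, map_sub, map_sub, map_one, map_pow, map_pow]
  · exact map_zero f

lemma map_phi {F G : Type*} [Field F] [Field G] (f : F →+* G) (n : ℕ) (Y : ℕ → F)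
    (Y' : ℕ → G) (hY : ∀ i, 1 ≤ i → i ≤ n → f (Y i) = Y' i) (a b : ℕ → ℕ) :
    f (phi n Y a b) = phi n Y' a b := by
  unfold phi
  split_ifs with h
  · rw [map_prod]
    apply Finset.prod_congr rfl
    intro i hi
    rw [Finset.mem_Icc] at hi
    split_ifs with h2
    · rw [map_sub, map_one, map_zpow₀, hY i hi.1 hi.2]
    · exact map_one f
  · exact map_zero f

-- ===================== index structure =====================

abbrev Jdx (n r : ℕ) := Fin (r + 1) × (Fin n → Fin 2)

def trP {n r : ℕ} (p : Jdx (n + 1) r) : Jdx n r := (p.1, fun j => p.2 j.castSucc)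

lemma idxTup_zero (n r : ℕ) (p : Jdx n r) : idxTup n r p 0 = (p.1 : ℕ) := rfl

lemma idxTup_tr (n r : ℕ) (p : Jdx (n + 1) r) {i : ℕ} (hi : i ≤ n) :
    idxTup n r (trP p) i = idxTup (n + 1) r p i := by
  rcases Nat.eq_zero_or_pos i with rfl | h
  · rfl
  · unfold idxTup trP
    rw [if_neg (by omega), if_neg (by omega), dif_pos ⟨by omega, hi⟩,
      dif_pos ⟨by omega, by omega⟩]
    simp only
    congr 1

lemma idxTup_top (n r : ℕ) (p : Jdx (n + 1) r) :
    idxTup (n + 1) r p (n + 1) = (p.2 (Fin.last n) : ℕ) := by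
  unfold idxTup
  rw [if_neg (by omega), dif_pos ⟨by omega, le_rfl⟩]
  congr 1

lemma idxTup_lt2 (n r : ℕ) (p : Jdx n r) (i : ℕ) (hi : 1 ≤ i) : idxTup n r p i ≤ 1 := by
  unfold idxTup
  rw [if_neg (by omega)]
  split_ifs with h
  · exact Nat.lt_succ_iff.1 (p.2 _).isLt
  · exact Nat.zero_le 1

lemma sfun_tr (n r : ℕ) (p : Jdx (n + 1) r) {i : ℕ} (hi : i ≤ n + 1) :
    sfun (idxTup n r (trP p)) i = sfun (idxTup (n + 1) r p) i := by
  unfold sfun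
  split_ifs with h
  · subst h; rw [idxTup_tr n r p (by omega)]
  · apply Finset.sum_congr rfl
    intro j hj
    rw [Finset.mem_range] at hj
    rw [idxTup_tr n r p (by omega)]

lemma Δ_tr (n r : ℕ) (p q : Jdx (n + 1) r) {i : ℕ} (hi : i ≤ n + 1) :
    Δ (idxTup n r (trP p)) (idxTup n r (trP q)) i
      = Δ (idxTup (n + 1) r p) (idxTup (n + 1) r q) i := by
  unfold Δ
  rw [sfun_tr n r p hi, sfun_tr n r q hi]

lemma sfun_cast (a : ℕ → ℕ) {i : ℕ} (hi : i ≠ 0) :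
    sfun a i = ((∑ j ∈ Finset.range i, a j : ℕ) : ℤ) := by
  unfold sfun
  rw [if_neg hi]
  push_cast
  rfl

lemma sfun_top (n r : ℕ) (p : Jdx (n + 1) r) :
    sfun (idxTup (n + 1) r p) (n + 2)
      = sfun (idxTup (n + 1) r p) (n + 1) + ((p.2 (Fin.last n) : ℕ) : ℤ) := by
  unfold sfun
  rw [if_neg (by omega), if_neg (by omega), Finset.sum_range_succ, idxTup_top]

lemma Δ_split (n r : ℕ) (p q : Jdx (n + 1) r) :
    Δ (idxTup (n + 1) r p) (idxTup (n + 1) r q) (n + 2)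
      = Δ (idxTup n r (trP p)) (idxTup n r (trP q)) (n + 1)
        + ((q.2 (Fin.last n) : ℕ) : ℤ) - ((p.2 (Fin.last n) : ℕ) : ℤ) := by
  unfold Δ
  rw [sfun_top, sfun_top, sfun_tr n r p (le_refl (n+1)), sfun_tr n r q (le_refl (n+1))]
  ring

lemma Δ_add (a b c : ℕ → ℕ) (i : ℕ) : Δ a b i + Δ b c i = Δ a c i := by
  unfold Δ; ring

lemma Δ_self (a : ℕ → ℕ) (i : ℕ) : Δ a a i = 0 := by unfold Δ; ring

lemma leT_split (n r : ℕ) (p q : Jdx (n + 1) r) :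
    leT (n + 1) (idxTup (n + 1) r p) (idxTup (n + 1) r q) ↔
      (leT n (idxTup n r (trP p)) (idxTup n r (trP q)) ∧
        ∑ j ∈ Finset.range (n + 2), idxTup (n + 1) r p j
          ≤ ∑ j ∈ Finset.range (n + 2), idxTup (n + 1) r q j) := by
  constructor
  · intro h
    refine ⟨fun i hi => ?_, h (n + 1) le_rfl⟩
    have h2 := h i (by omega)
    calc ∑ j ∈ Finset.range (i + 1), idxTup n r (trP p) j
        = ∑ j ∈ Finset.range (i + 1), idxTup (n + 1) r p j :=
          Finset.sum_congr rfl (fun j hj => idxTup_tr n r p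
            (by rw [Finset.mem_range] at hj; omega))
      _ ≤ ∑ j ∈ Finset.range (i + 1), idxTup (n + 1) r q j := h2
      _ = ∑ j ∈ Finset.range (i + 1), idxTup n r (trP q) j :=
          (Finset.sum_congr rfl (fun j hj => idxTup_tr n r q
            (by rw [Finset.mem_range] at hj; omega))).symm
  · rintro ⟨h1, h2⟩ i hi
    rcases Nat.lt_or_ge i (n + 1) with h3 | h3
    · have h4 := h1 i (by omega)
      calc ∑ j ∈ Finset.range (i + 1), idxTup (n + 1) r p j
          = ∑ j ∈ Finset.range (i + 1), idxTup n r (trP p) j :=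
            (Finset.sum_congr rfl (fun j hj => idxTup_tr n r p
              (by rw [Finset.mem_range] at hj; omega))).symm
        _ ≤ ∑ j ∈ Finset.range (i + 1), idxTup n r (trP q) j := h4
        _ = ∑ j ∈ Finset.range (i + 1), idxTup (n + 1) r q j :=
            Finset.sum_congr rfl (fun j hj => idxTup_tr n r q
              (by rw [Finset.mem_range] at hj; omega))
    · have h4 : i = n + 1 := by omega
      subst h4
      exact h2

-- ===================== phi split =====================

lemma phi_split {F : Type*} [Field F] (Y : ℕ → F) (n r : ℕ) (p q : Jdx (n + 1) r) :
    phi (n + 1) Y (idxTup (n + 1) r p) (idxTup (n + 1) r q)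
      = phi n Y (idxTup n r (trP p)) (idxTup n r (trP q))
        * (if (p.2 (Fin.last n) : ℕ) = 1 ∧ (q.2 (Fin.last n) : ℕ) = 0
           then 1 - Y (n + 1) ^ Δ (idxTup n r (trP p)) (idxTup n r (trP q)) (n + 1)
           else 1) := by
  by_cases hL : leT (n + 1) (idxTup (n + 1) r p) (idxTup (n + 1) r q)
  · have hL' := ((leT_split n r p q).1 hL).1
    rw [phi, if_pos hL, phi, if_pos hL', Finset.prod_Icc_succ_top (by omega)]
    congr 1
    · apply Finset.prod_congr rfl
      intro i hi
      rw [Finset.mem_Icc] at hi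
      rw [idxTup_tr n r p hi.2, idxTup_tr n r q hi.2, Δ_tr n r p q (by omega)]
    · rw [idxTup_top, idxTup_top, Δ_tr n r p q (le_refl (n + 1))]
  · rw [phi, if_neg hL]
    by_cases hL' : leT n (idxTup n r (trP p)) (idxTup n r (trP q))
    · -- leT fails only at the top level
      have h2 : ¬ (∑ j ∈ Finset.range (n + 2), idxTup (n + 1) r p j
          ≤ ∑ j ∈ Finset.range (n + 2), idxTup (n + 1) r q j) := by
        intro h3
        exact hL ((leT_split n r p q).2 ⟨hL', h3⟩)
      have h4 : ∑ j ∈ Finset.range (n + 1), idxTup (n + 1) r p j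
          ≤ ∑ j ∈ Finset.range (n + 1), idxTup (n + 1) r q j := by
        have h5 := hL' n le_rfl
        calc ∑ j ∈ Finset.range (n + 1), idxTup (n + 1) r p j
            = ∑ j ∈ Finset.range (n + 1), idxTup n r (trP p) j :=
              (Finset.sum_congr rfl (fun j hj => idxTup_tr n r p
                (by rw [Finset.mem_range] at hj; omega))).symm
          _ ≤ ∑ j ∈ Finset.range (n + 1), idxTup n r (trP q) j := h5
          _ = ∑ j ∈ Finset.range (n + 1), idxTup (n + 1) r q j :=
              Finset.sum_congr rfl (fun j hj => idxTup_tr n r q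
                (by rw [Finset.mem_range] at hj; omega))
      rw [Finset.sum_range_succ (fun j => idxTup (n + 1) r p j) (n + 1),
        Finset.sum_range_succ (fun j => idxTup (n + 1) r q j) (n + 1)] at h2
      rw [idxTup_top, idxTup_top] at h2
      have hp2 : (p.2 (Fin.last n) : ℕ) ≤ 1 := Nat.lt_succ_iff.1 (p.2 _).isLt
      have hq2 : (q.2 (Fin.last n) : ℕ) ≤ 1 := Nat.lt_succ_iff.1 (q.2 _).isLt
      have hcond : (p.2 (Fin.last n) : ℕ) = 1 ∧ (q.2 (Fin.last n) : ℕ) = 0 := by omega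
      have heq : ∑ j ∈ Finset.range (n + 1), idxTup (n + 1) r p j
          = ∑ j ∈ Finset.range (n + 1), idxTup (n + 1) r q j := by omega
      have hΔ : Δ (idxTup n r (trP p)) (idxTup n r (trP q)) (n + 1) = 0 := by
        unfold Δ
        rw [sfun_cast _ (by omega : n + 1 ≠ 0), sfun_cast _ (by omega : n + 1 ≠ 0)]
        have e1 : ∑ j ∈ Finset.range (n + 1), idxTup n r (trP p) j
            = ∑ j ∈ Finset.range (n + 1), idxTup (n + 1) r p j :=
          Finset.sum_congr rfl (fun j hj => idxTup_tr n r p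
            (by rw [Finset.mem_range] at hj; omega))
        have e2 : ∑ j ∈ Finset.range (n + 1), idxTup n r (trP q) j
            = ∑ j ∈ Finset.range (n + 1), idxTup (n + 1) r q j :=
          Finset.sum_congr rfl (fun j hj => idxTup_tr n r q
            (by rw [Finset.mem_range] at hj; omega))
        rw [e1, e2, heq]
        ring
      rw [if_pos hcond, hΔ]
      norm_num
    · rw [phi, if_neg hL']
      ring

-- ===================== matrix entry splits =====================

lemma Zmat_split (n r : ℕ) (p q : Jdx (n + 1) r) :
    Zmat (n + 1) r p q = emb n (Zmat n r (trP p) (trP q)) *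
      (if (p.2 (Fin.last n) : ℕ) = 1 ∧ (q.2 (Fin.last n) : ℕ) = 0
       then 1 - (Yvar (n + 1) (n + 1))
          ^ Δ (idxTup n r (trP p)) (idxTup n r (trP q)) (n + 1)
       else 1) := by
  unfold Zmat
  rw [map_mul, map_qbinom,
    map_phi (emb n) n (Yvar n) (Yvar (n + 1)) (fun i _ _ => emb_Yvar n i (by omega)),
    emb_Yvar n 0 (by omega), idxTup_tr n r p (Nat.zero_le n), idxTup_tr n r q (Nat.zero_le n),
    phi_split (Yvar (n + 1)) n r p q]
  ring

lemma Mmat_split (n r : ℕ) (p q : Jdx (n + 1) r) :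
    Mmat (n + 1) r p q = emb n (Mmat n r (trP p) (trP q)) *
      ((-1 : RF (n + 1)) ^ (((q.2 (Fin.last n) : ℕ) : ℤ) - ((p.2 (Fin.last n) : ℕ) : ℤ))
        * (Yvar (n + 1) (n + 1)) ^ (Δ (idxTup n r (trP p)) (idxTup n r (trP q)) (n + 1))
        * (if (p.2 (Fin.last n) : ℕ) = 1 ∧ (q.2 (Fin.last n) : ℕ) = 0
           then 1 - (Yvar (n + 1) (n + 1))
              ^ (-(Δ (idxTup n r (trP p)) (idxTup n r (trP q)) (n + 1)))
           else 1)) := by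
  unfold Mmat
  rw [map_mul, map_mul, map_mul, map_zpow₀, map_neg, map_one, map_prod, map_qbinom, map_inv₀,
    map_phi (emb n) n (fun i => (Yvar n i)⁻¹) (fun i => (Yvar (n + 1) i)⁻¹)
      (fun i _ h2 => by rw [map_inv₀, emb_Yvar n i (by omega)]),
    emb_Yvar n 0 (by omega), idxTup_tr n r p (Nat.zero_le n), idxTup_tr n r q (Nat.zero_le n),
    phi_split (fun i => (Yvar (n + 1) i)⁻¹) n r p q]
  have hprod : ∀ i ∈ Finset.range (n + 1),
      emb n (Yvar n i) ^ Δ (idxTup n r (trP p)) (idxTup n r (trP q)) i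
        = (Yvar (n + 1) i) ^ Δ (idxTup (n + 1) r p) (idxTup (n + 1) r q) i := by
    intro i hi
    rw [Finset.mem_range] at hi
    rw [emb_Yvar n i (by omega), Δ_tr n r p q (by omega)]
  rw [Finset.prod_congr rfl (fun i hi => map_zpow₀ (emb n) (Yvar n i) _),
    Finset.prod_congr rfl hprod]
  rw [Finset.prod_range_succ (fun i => (Yvar (n + 1) i)
      ^ Δ (idxTup (n + 1) r p) (idxTup (n + 1) r q) i) (n + 1)]
  rw [Δ_split n r p q]
  set e := Δ (idxTup n r (trP p)) (idxTup n r (trP q)) (n + 1) with he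
  have hsign : (-1 : RF (n + 1)) ^ (e + ((q.2 (Fin.last n) : ℕ) : ℤ)
      - ((p.2 (Fin.last n) : ℕ) : ℤ))
      = (-1 : RF (n + 1)) ^ e * (-1 : RF (n + 1))
          ^ (((q.2 (Fin.last n) : ℕ) : ℤ) - ((p.2 (Fin.last n) : ℕ) : ℤ)) := by
    rw [← zpow_add₀ (by norm_num : (-1 : RF (n + 1)) ≠ 0)]
    congr 1
    ring
  rw [hsign]
  have hΔtop : Δ (idxTup (n + 1) r p) (idxTup (n + 1) r q) (n + 1) = e := by
    rw [he, Δ_tr n r p q (le_refl (n + 1))]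
  rw [hΔtop]
  have hinv : (fun i => (Yvar (n + 1) i)⁻¹) (n + 1) ^ e
      = (Yvar (n + 1) (n + 1)) ^ (-e) := by
    simp only [inv_zpow, zpow_neg]
  rw [hinv]
  ring

-- ===================== base case n = 0 =====================

lemma choose_two_add (a k : ℕ) : (a + k).choose 2 = a.choose 2 + a * k + k.choose 2 := by
  induction k with
  | zero => simp
  | succ k ih =>
    have h1 : a + (k + 1) = (a + k) + 1 := by omega
    rw [h1, Nat.choose_succ_succ (a + k) 1, Nat.choose_one_right, ih,
      Nat.choose_succ_succ k 1, Nat.choose_one_right]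
    ring

lemma leT_zero (a b : ℕ → ℕ) : leT 0 a b ↔ a 0 ≤ b 0 := by
  constructor
  · intro h
    have := h 0 le_rfl
    simpa [Finset.sum_range_one] using this
  · intro h i hi
    have h2 : i = 0 := by omega
    subst h2
    simpa [Finset.sum_range_one] using h

lemma phi_zero {F : Type*} [Field F] (Y : ℕ → F) (a b : ℕ → ℕ) :
    phi 0 Y a b = if a 0 ≤ b 0 then 1 else 0 := by
  unfold phi
  rw [Finset.Icc_eq_empty (by omega : ¬(1 : ℕ) ≤ 0), Finset.prod_empty]
  by_cases h : a 0 ≤ b 0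
  · rw [if_pos ((leT_zero a b).2 h), if_pos h]
  · rw [if_neg (fun h2 => h ((leT_zero a b).1 h2)), if_neg h]

lemma idxTup_zero_val (r : ℕ) (p : Jdx 0 r) : idxTup 0 r p 0 = (p.1 : ℕ) := rfl

lemma sfun_zero_one (r : ℕ) (p : Jdx 0 r) : sfun (idxTup 0 r p) 1 = ((p.1 : ℕ) : ℤ) := by
  unfold sfun
  rw [if_neg one_ne_zero, Finset.sum_range_one]
  rfl

lemma sfun_zero_zero (r : ℕ) (p : Jdx 0 r) :
    sfun (idxTup 0 r p) 0 = (((p.1 : ℕ).choose 2 : ℕ) : ℤ) := by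
  unfold sfun
  rw [if_pos rfl]
  rfl

set_option maxHeartbeats 2000000 in
lemma MZ_zero (r : ℕ) : Mmat 0 r * Zmat 0 r = 1 := by
  have hq := Yvar_pow_ne_one 0 0 (by omega)
  have hq0 := Yvar_ne_zero 0 0
  set q : RF 0 := Yvar 0 0 with hqdef
  ext a c
  rw [Matrix.mul_apply, Matrix.one_apply, Fintype.sum_prod_type]
  have hsum : ∀ x : Fin (r + 1), ∑ y : Fin 0 → Fin 2,
      Mmat 0 r a (x, y) * Zmat 0 r (x, y) c
        = Mmat 0 r a (x, default) * Zmat 0 r (x, default) c :=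
    fun x => by
      rw [Finset.univ_unique, Finset.sum_singleton]
      have hd : (@default (Fin 0 → Fin 2) Unique.instInhabited) = (default : Fin 0 → Fin 2) :=
        Subsingleton.elim _ _
      rw [hd]
  rw [Finset.sum_congr rfl (fun x _ => hsum x)]
  set a0 := (a.1 : ℕ) with ha0
  set c0 := (c.1 : ℕ) with hc0
  have key : ∀ x : Fin (r + 1), Mmat 0 r a (x, default) * Zmat 0 r (x, default) c
      = (if a0 ≤ (x : ℕ) ∧ (x : ℕ) ≤ c0 then
          (-1 : RF 0) ^ ((x : ℕ) - a0) * q ^ (((x : ℕ) - a0).choose 2)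
            * qbinom q (c0 - a0) ((x : ℕ) - a0) else 0) * qbinom q c0 a0 := by
    intro x
    set b0 := (x : ℕ) with hb0
    unfold Mmat Zmat
    rw [phi_zero, phi_zero, idxTup_zero_val, idxTup_zero_val, idxTup_zero_val]
    rw [Finset.prod_range_succ, Finset.prod_range_zero, one_mul]
    unfold Δ
    rw [sfun_zero_one, sfun_zero_one, sfun_zero_zero, sfun_zero_zero]
    show (-1 : RF 0) ^ ((b0 : ℤ) - (a0 : ℤ)) * q ^ (((b0.choose 2 : ℕ) : ℤ) - ((a0.choose 2 : ℕ) : ℤ))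
        * (qbinom q⁻¹ b0 a0 * if a0 ≤ b0 then 1 else 0)
        * (qbinom q c0 b0 * if b0 ≤ c0 then 1 else 0) = _
    by_cases h1 : a0 ≤ b0
    · by_cases h2 : b0 ≤ c0
      · rw [if_pos h1, if_pos h2, if_pos ⟨h1, h2⟩]
        set k := b0 - a0 with hk
        have hb : b0 = a0 + k := by omega
        have hch : b0.choose 2 = a0.choose 2 + a0 * k + k.choose 2 := by
          rw [hb, choose_two_add]
        have hsgn : (-1 : RF 0) ^ ((b0 : ℤ) - (a0 : ℤ)) = (-1 : RF 0) ^ k := by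
          have : (b0 : ℤ) - (a0 : ℤ) = (k : ℤ) := by omega
          rw [this, zpow_natCast]
        have hinv := qbinom_inv q hq0 hq h1
        have hqp : (q : RF 0) ^ (a0 * (b0 - a0)) ≠ 0 := pow_ne_zero _ hq0
        have hqp' : (q : RF 0) ^ (a0 * k) ≠ 0 := pow_ne_zero _ hq0
        have hinv2 : qbinom q⁻¹ b0 a0 = qbinom q b0 a0 * (q ^ (a0 * k))⁻¹ := by
          rw [← hk] at hinv
          exact (eq_mul_inv_iff_mul_eq₀ hqp').2 hinv
        have hpow : q ^ (((b0.choose 2 : ℕ) : ℤ) - ((a0.choose 2 : ℕ) : ℤ)) * (q ^ (a0 * k))⁻¹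
            = q ^ (k.choose 2) := by
          rw [← zpow_natCast q (a0 * k), ← zpow_neg, ← zpow_add₀ hq0, ← zpow_natCast q (k.choose 2)]
          congr 1
          push_cast [hch]
          ring
        have htri := qbinom_trinom q hq h1 h2
        calc (-1 : RF 0) ^ ((b0 : ℤ) - (a0 : ℤ))
              * q ^ (((b0.choose 2 : ℕ) : ℤ) - ((a0.choose 2 : ℕ) : ℤ))
              * (qbinom q⁻¹ b0 a0 * 1) * (qbinom q c0 b0 * 1)
            = (-1 : RF 0) ^ k
              * (q ^ (((b0.choose 2 : ℕ) : ℤ) - ((a0.choose 2 : ℕ) : ℤ)) * (q ^ (a0 * k))⁻¹)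
              * (qbinom q b0 a0 * qbinom q c0 b0) := by
              rw [hsgn, hinv2]; ring
          _ = (-1 : RF 0) ^ k * q ^ (k.choose 2) * (qbinom q c0 a0 * qbinom q (c0 - a0) k) := by
              rw [hpow, htri]
          _ = (-1 : RF 0) ^ k * q ^ (k.choose 2) * qbinom q (c0 - a0) k * qbinom q c0 a0 := by
              ring
      · conv_rhs => rw [if_neg (show ¬(a0 ≤ b0 ∧ b0 ≤ c0) from fun hc => h2 hc.2)]
        rw [if_neg h2]
        ring
    · conv_rhs => rw [if_neg (show ¬(a0 ≤ b0 ∧ b0 ≤ c0) from fun hc => h1 hc.1)]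
      rw [if_neg h1]
      ring
  rw [Finset.sum_congr rfl (fun x _ => key x), ← Finset.sum_mul]
  rw [← Finset.sum_range (fun b => if a0 ≤ b ∧ b ≤ c0 then
      (-1 : RF 0) ^ (b - a0) * q ^ ((b - a0).choose 2) * qbinom q (c0 - a0) (b - a0) else 0)]
  rw [chain_sum q hq a0 c0 r (by omega : c0 ≤ r)]
  by_cases h : a0 = c0
  · rw [if_pos h, if_pos (by
      apply Prod.ext
      · exact Fin.ext h
      · exact Subsingleton.elim _ _)]
    rw [one_mul, h, qbinom_self q hq]
  · rw [if_neg h, if_neg (by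
      intro h2
      exact h (congrArg (fun p : Jdx 0 r => (p.1 : ℕ)) h2))]
    ring

-- ===================== inductive step =====================

def Esnoc {n r : ℕ} (x : Jdx n r × Fin 2) : Jdx (n + 1) r := (x.1.1, Fin.snoc x.1.2 x.2)

lemma trP_Esnoc {n r : ℕ} (x : Jdx n r × Fin 2) : trP (Esnoc x) = x.1 := by
  obtain ⟨⟨u, v⟩, β⟩ := x
  unfold trP Esnoc
  refine Prod.ext rfl ?_
  funext j
  exact Fin.snoc_castSucc (α := fun _ => Fin 2) β v j

lemma last_Esnoc {n r : ℕ} (x : Jdx n r × Fin 2) : (Esnoc x).2 (Fin.last n) = x.2 := by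
  obtain ⟨⟨u, v⟩, β⟩ := x
  exact Fin.snoc_last (α := fun _ => Fin 2) β v

noncomputable def Eequiv (n r : ℕ) : (Jdx n r × Fin 2) ≃ Jdx (n + 1) r where
  toFun := Esnoc
  invFun := fun p => ((p.1, fun j => p.2 j.castSucc), p.2 (Fin.last n))
  left_inv := by
    rintro ⟨⟨u, v⟩, β⟩
    unfold Esnoc
    simp only [Fin.snoc_castSucc, Fin.snoc_last]
  right_inv := by
    rintro ⟨u, v⟩
    unfold Esnoc
    refine Prod.ext rfl ?_
    exact Fin.snoc_init_self v

set_option maxHeartbeats 1000000 in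
lemma MZ_succ (n r : ℕ) (IH : Mmat n r * Zmat n r = 1) :
    Mmat (n + 1) r * Zmat (n + 1) r = 1 := by
  have hY0 : Yvar (n + 1) (n + 1) ≠ 0 := Yvar_ne_zero _ _
  set Y := Yvar (n + 1) (n + 1) with hYdef
  ext a c
  rw [Matrix.mul_apply, Matrix.one_apply]
  rw [← Fintype.sum_equiv (Eequiv n r)
    (fun x => Mmat (n + 1) r a (Esnoc x) * Zmat (n + 1) r (Esnoc x) c)
    (fun b => Mmat (n + 1) r a b * Zmat (n + 1) r b c) (fun x => rfl)]
  rw [Fintype.sum_prod_type]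
  set D := Δ (idxTup n r (trP a)) (idxTup n r (trP c)) (n + 1) with hD
  set G : RF (n + 1) := (if (c.2 (Fin.last n) : ℕ) = 1 then
      (if (a.2 (Fin.last n) : ℕ) = 1 then 1 else 0)
    else (if (a.2 (Fin.last n) : ℕ) = 1 then 1 - Y ^ D else Y ^ D)) with hG
  have hα : (a.2 (Fin.last n) : ℕ) = 0 ∨ (a.2 (Fin.last n) : ℕ) = 1 := by
    have := (a.2 (Fin.last n)).isLt
    omega
  have hγ : (c.2 (Fin.last n) : ℕ) = 0 ∨ (c.2 (Fin.last n) : ℕ) = 1 := by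
    have := (c.2 (Fin.last n)).isLt
    omega
  have key : ∀ b' : Jdx n r,
      ∑ β : Fin 2, Mmat (n + 1) r a (Esnoc (b', β)) * Zmat (n + 1) r (Esnoc (b', β)) c
        = emb n (Mmat n r (trP a) b') * emb n (Zmat n r b' (trP c)) * G := by
    intro b'
    rw [Fin.sum_univ_two]
    rw [Mmat_split n r a (Esnoc (b', 0)), Mmat_split n r a (Esnoc (b', 1)),
      Zmat_split n r (Esnoc (b', 0)) c, Zmat_split n r (Esnoc (b', 1)) c]
    simp only [trP_Esnoc, last_Esnoc]
    set e := Δ (idxTup n r (trP a)) (idxTup n r b') (n + 1) with he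
    set f := Δ (idxTup n r b') (idxTup n r (trP c)) (n + 1) with hf
    have hef : e + f = D := Δ_add _ _ _ _
    have hs3 : (-1 : RF (n + 1)) ^ (-1 : ℤ) = -1 := by
      rw [zpow_neg, zpow_one, inv_neg, inv_one]
    have hYe : Y ^ e ≠ 0 := zpow_ne_zero _ hY0
    rw [hG, ← hef]
    rcases hα with hα | hα <;> rcases hγ with hγ | hγ <;>
      rw [hα, hγ] <;>
      (try norm_num [zpow_add₀ hY0, zpow_neg, hs3]) <;>
      (try field_simp) <;>
      (try ring)
    all_goals (rw [show 1 + n = n + 1 by ring, ← hYdef]; field_simp)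
    all_goals ring
  rw [Finset.sum_congr rfl (fun b' _ => key b'), ← Finset.sum_mul]
  have hsum2 : ∑ b' : Jdx n r, emb n (Mmat n r (trP a) b') * emb n (Zmat n r b' (trP c))
      = if trP a = trP c then 1 else 0 := by
    have h1 : ∑ b' : Jdx n r, emb n (Mmat n r (trP a) b') * emb n (Zmat n r b' (trP c))
        = emb n (∑ b' : Jdx n r, Mmat n r (trP a) b' * Zmat n r b' (trP c)) := by
      rw [map_sum]
      exact Finset.sum_congr rfl (fun b' _ => (map_mul _ _ _).symm)
    rw [h1, ← Matrix.mul_apply, IH, Matrix.one_apply, apply_ite (emb n), map_one, map_zero]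
  rw [hsum2]
  by_cases h : trP a = trP c
  · rw [if_pos h]
    have hD0 : D = 0 := by
      rw [hD, h]
      exact Δ_self _ _
    rcases hα with hα | hα <;> rcases hγ with hγ | hγ
    · -- α = 0, γ = 0 : G = Y^0 = 1, a = c
      have hac : a = c := by
        refine Prod.ext (congrArg (fun p : Jdx n r => p.1) h) ?_
        funext j
        refine Fin.lastCases ?_ (fun i => ?_) j
        · have := (a.2 (Fin.last n)).isLt
          refine Fin.ext ?_
          rw [hα, hγ]
        · exact congrFun (congrArg Prod.snd h) i
      rw [if_pos hac, hG, if_neg (by omega), if_neg (by omega), hD0, zpow_zero]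
      ring
    · have hac : a ≠ c := fun hc => by
        rw [hc] at hα
        omega
      rw [if_neg hac, hG, if_pos hγ, if_neg (by omega)]
      ring
    · have hac : a ≠ c := fun hc => by
        rw [hc] at hα
        omega
      rw [if_neg hac, hG, if_neg (by omega), if_pos hα, hD0, zpow_zero]
      ring
    · have hac : a = c := by
        refine Prod.ext (congrArg (fun p : Jdx n r => p.1) h) ?_
        funext j
        refine Fin.lastCases ?_ (fun i => ?_) j
        · refine Fin.ext ?_
          rw [hα, hγ]
        · exact congrFun (congrArg Prod.snd h) i
      rw [if_pos hac, hG, if_pos hγ, if_pos hα]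
      ring
  · rw [if_neg h, if_neg (fun hc => h (congrArg trP hc))]
    ring

theorem stmt_14 (n r : ℕ) :
    Mmat n r * Zmat n r = 1 ∧ Zmat n r * Mmat n r = 1 := by
  have hMZ : Mmat n r * Zmat n r = 1 := by
    induction n with
    | zero => exact MZ_zero r
    | succ n ih => exact MZ_succ n r ih
  exact ⟨hMZ, mul_eq_one_comm.1 hMZ⟩
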